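/- Let G be a simple graph of order n with σ₂(G) ≥ n − 2. Suppose u₀, u₃ ∈ V(G) are non-adjacent with N(u₀) ∪ N(u₃) = V(G) \ {u₀, u₃}, N(u₀) ∩ N(u₃) = ∅, and deg(u₀) + deg(u₃) = n − 2. Then for any i ∈ {0,3} and any v ∈ N(u_i): deg(v) ≥ deg(u_i); moreover if N(v) ∩ N(u_{3−i}) = ∅ then N(v) = (N(u_i) \ {v}) ∪ {u_i}. -/

import Mathlib

private lemma aux_11 {V : Type*} [Fintype V] (G : SimpleGraph V) (n : ℕ)
    (hsigma : ∀ x y : V, x ≠ y → ¬ G.Adj x y →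
      n - 2 ≤ (G.neighborSet x).ncard + (G.neighborSet y).ncard)
    (u₀ u₃ : V)
    (hunion : G.neighborSet u₀ ∪ G.neighborSet u₃ = Set.univ \ {u₀, u₃})
    (hinter : G.neighborSet u₀ ∩ G.neighborSet u₃ = ∅)
    (hdegsum : (G.neighborSet u₀).ncard + (G.neighborSet u₃).ncard = n - 2) :
    ∀ v ∈ G.neighborSet u₀,
      (G.neighborSet u₀).ncard ≤ (G.neighborSet v).ncard ∧
      (G.neighborSet v ∩ G.neighborSet u₃ = ∅ →
        G.neighborSet v = (G.neighborSet u₀ \ {v}) ∪ {u₀}) := by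
  intro v hv
  have hvV : v ∈ (Set.univ \ {u₀, u₃} : Set V) := hunion ▸ Set.mem_union_left _ hv
  have hv3 : v ≠ u₃ := by
    intro h; exact hvV.2 (by simp [h])
  have hvn3 : v ∉ G.neighborSet u₃ := by
    intro h; exact Set.notMem_empty v (hinter ▸ Set.mem_inter hv h)
  have hdeg : (G.neighborSet u₀).ncard ≤ (G.neighborSet v).ncard := by
    have := hsigma v u₃ hv3 (fun h => hvn3 h.symm)
    omega
  refine ⟨hdeg, fun h0 => ?_⟩
  have hsub : G.neighborSet v ⊆ (G.neighborSet u₀ \ {v}) ∪ {u₀} := by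
    intro w hw
    by_cases hw0 : w = u₀
    · right; simp [hw0]
    have hw3 : w ≠ u₃ := by
      intro h; subst h
      exact hvn3 (G.adj_symm hw)
    have hmem : w ∈ G.neighborSet u₀ ∪ G.neighborSet u₃ := by
      rw [hunion]; exact ⟨trivial, by simp [hw0, hw3]⟩
    rcases hmem with h | h
    · left
      refine ⟨h, ?_⟩
      simp only [Set.mem_singleton_iff]
      intro he; subst he; exact G.irrefl hw
    · exact absurd (Set.mem_inter hw h) (by rw [h0]; exact Set.notMem_empty w)
  have hpos : 0 < (G.neighborSet u₀).ncard :=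
    (Set.ncard_pos (Set.toFinite _)).mpr ⟨v, hv⟩
  have hcard : ((G.neighborSet u₀ \ {v}) ∪ {u₀}).ncard = (G.neighborSet u₀).ncard := by
    rw [Set.union_singleton,
      Set.ncard_insert_of_notMem (by simp) (Set.toFinite _),
      Set.ncard_diff_singleton_of_mem hv]
    omega
  exact Set.eq_of_subset_of_ncard_le hsub (by rw [hcard]; exact hdeg) (Set.toFinite _)

theorem stmt_11 {V : Type*} [Fintype V] (G : SimpleGraph V) (n : ℕ) (hn : n = Fintype.card V)
    (hsigma : ∀ x y : V, x ≠ y → ¬ G.Adj x y →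
      n - 2 ≤ (G.neighborSet x).ncard + (G.neighborSet y).ncard)
    (u₀ u₃ : V) (hne : u₀ ≠ u₃) (hnadj : ¬ G.Adj u₀ u₃)
    (hunion : G.neighborSet u₀ ∪ G.neighborSet u₃ = Set.univ \ {u₀, u₃})
    (hinter : G.neighborSet u₀ ∩ G.neighborSet u₃ = ∅)
    (hdegsum : (G.neighborSet u₀).ncard + (G.neighborSet u₃).ncard = n - 2) :
    (∀ v ∈ G.neighborSet u₀,
      (G.neighborSet u₀).ncard ≤ (G.neighborSet v).ncard ∧
      (G.neighborSet v ∩ G.neighborSet u₃ = ∅ →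
        G.neighborSet v = (G.neighborSet u₀ \ {v}) ∪ {u₀})) ∧
    (∀ v ∈ G.neighborSet u₃,
      (G.neighborSet u₃).ncard ≤ (G.neighborSet v).ncard ∧
      (G.neighborSet v ∩ G.neighborSet u₀ = ∅ →
        G.neighborSet v = (G.neighborSet u₃ \ {v}) ∪ {u₃})) := by
  refine ⟨aux_11 G n hsigma u₀ u₃ hunion hinter hdegsum, ?_⟩
  apply aux_11 G n hsigma u₃ u₀
  · rw [Set.union_comm, Set.pair_comm]; exact hunion
  · rw [Set.inter_comm]; exact hinter
  · rw [add_comm]; exact hdegsum
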